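/- Let R be a subset of a commutative ring, let k > 2, and let a = (a₁,…,a_k) ∈ R^k and b = (b₁,…,b_k) ∈ R^k both be λ-quiddity cycles for the same λ ∈ {±1}. If a ⊕ b = b ⊕ a (equality of tuples), then a = b. -/

import Mathlib

open Matrix

/-- The 2×2 matrix `[[x, -1], [1, 0]]` associated to an entry of a quiddity cycle. -/
def qMat {R : Type*} [CommRing R] (x : R) : Matrix (Fin 2) (Fin 2) R := !![x, -1; 1, 0]

/-- `c` is a `lam`-quiddity cycle: the product `∏ [[cₜ,−1],[1,0]]` equals `lam • Id`. -/
def IsQC {R : Type*} [CommRing R] (lam : R) (c : List R) : Prop :=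
  (c.map qMat).prod = lam • (1 : Matrix (Fin 2) (Fin 2) R)

/-- `a ⊕ b = (a₁+b_l, a₂, …, a_{k−1}, a_k+b₁, b₂, …, b_{l−1})`. -/
def oplus {R : Type*} [CommRing R] (a b : List R) : List R :=
  (a.head?.getD 0 + b.getLast?.getD 0) ::
    ((a.drop 1).dropLast ++ (a.getLast?.getD 0 + b.head?.getD 0) :: (b.drop 1).dropLast)

/-- Dihedral equivalence: `a` is a cyclic rotation of `b` or of the reversal of `b`,
i.e. `a = b^σ` for some `σ` in the dihedral group acting on `n` points. -/
def DihEquiv {α : Type*} (a b : List α) : Prop :=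
  ∃ i : ℕ, a = b.rotate i ∨ a = b.reverse.rotate i

/-- The action of a dihedral group element, encoded by a rotation amount and a reversal flag. -/
def applyDih {α : Type*} (p : ℕ × Bool) (c : List α) : List α :=
  if p.2 then c.reverse.rotate p.1 else c.rotate p.1

private def invM {R : Type*} [CommRing R] (x : R) : Matrix (Fin 2) (Fin 2) R := !![0, 1; -1, x]

private lemma invM_mul {R : Type*} [CommRing R] (x : R) : invM x * qMat x = 1 := by
  simp [invM, qMat, Matrix.mul_fin_two, Matrix.one_fin_two]

private lemma mul_invM {R : Type*} [CommRing R] (x : R) : qMat x * invM x = 1 := by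
  simp [invM, qMat, Matrix.mul_fin_two, Matrix.one_fin_two]

private lemma entry10 {R : Type*} [CommRing R] (P : Matrix (Fin 2) (Fin 2) R) (u v : R) :
    (qMat u * P * qMat v) 1 0 = P 0 0 * v + P 0 1 := by
  simp [qMat, Matrix.mul_apply, Matrix.vecMul, dotProduct, Matrix.vecHead, Fin.sum_univ_two]

private lemma oplus_eq {R : Type*} [CommRing R] (u v u' v' : R) (m m' : List R) :
    oplus (u :: (m ++ [v])) (u' :: (m' ++ [v'])) =
      (u + v') :: (m ++ (v + u') :: m') := by
  have g1 : (u :: (m ++ [v])).getLast? = some v := by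
    rw [← List.cons_append]; exact List.getLast?_concat
  have g2 : (u' :: (m' ++ [v'])).getLast? = some v' := by
    rw [← List.cons_append]; exact List.getLast?_concat
  simp [oplus, g1, g2, List.dropLast_concat]

/-- If `a` and `b` are `λ`-quiddity cycles of the same length `k > 2` (same `λ ∈ {±1}`)
and `a ⊕ b = b ⊕ a` as tuples, then `a = b`. -/
theorem stmt6 {R : Type*} [CommRing R] (lam : R) (h : lam = 1 ∨ lam = -1)
    (a b : List R) (hk : 2 < a.length) (hl : b.length = a.length)
    (hqa : IsQC lam a) (hqb : IsQC lam b)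
    (hcomm : oplus a b = oplus b a) :
    a = b := by
  have hlam2 : lam * lam = 1 := by rcases h with rfl | rfl <;> ring
  rcases a with _ | ⟨u, t⟩
  · simp at hk
  rcases t.eq_nil_or_concat with rfl | ⟨m, v, rfl⟩
  · simp at hk
  rcases b with _ | ⟨u', t'⟩
  · simp at hl
  rcases t'.eq_nil_or_concat with rfl | ⟨m', v', rfl⟩
  · simp [List.length_concat] at hl hk
  simp only [List.concat_eq_append] at *
  have hm : m.length = m'.length := by
    simp [List.length_append] at hl hk; omega
  rw [oplus_eq, oplus_eq] at hcomm
  injection hcomm with h1 h2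
  obtain ⟨meq, h3⟩ := List.append_inj h2 hm
  injection h3 with h3 _
  subst meq
  -- quiddity conditions
  have pa : qMat u * (m.map qMat).prod * qMat v = lam • 1 := by
    have := hqa
    simp only [IsQC, List.map_cons, List.map_append, List.map_singleton, List.map_nil,
      List.prod_cons, List.prod_append, List.prod_singleton, List.prod_nil, mul_one] at this
    rw [← mul_assoc] at this
    exact this
  have pb : qMat u' * (m.map qMat).prod * qMat v' = lam • 1 := by
    have := hqb
    simp only [IsQC, List.map_cons, List.map_append, List.map_singleton, List.map_nil,
      List.prod_cons, List.prod_append, List.prod_singleton, List.prod_nil, mul_one] at this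
    rw [← mul_assoc] at this
    exact this
  set P := (m.map qMat).prod with hPdef
  have e1 : P 0 0 * v + P 0 1 = 0 := by
    have := congrArg (fun M => M 1 0) pa
    simpa [entry10, Matrix.smul_apply, Matrix.one_apply] using this
  have e2 : P 0 0 * v' + P 0 1 = 0 := by
    have := congrArg (fun M => M 1 0) pb
    simpa [entry10, Matrix.smul_apply, Matrix.one_apply] using this
  have hP : P = lam • (invM u * invM v) := by
    calc P = (invM u * qMat u) * P * (qMat v * invM v) := by
            rw [invM_mul, mul_invM, one_mul, mul_one]
      _ = invM u * (qMat u * P * qMat v) * invM v := by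
            simp only [mul_assoc]
      _ = invM u * (lam • 1) * invM v := by rw [pa]
      _ = lam • (invM u * invM v) := by
            rw [mul_smul_comm, mul_one, smul_mul_assoc]
  have hP00 : P 0 0 = -lam := by
    rw [hP]
    simp [invM, Matrix.smul_apply, Matrix.mul_apply, Fin.sum_univ_two]
  have hv : v = v' := by
    linear_combination (-lam) * e1 + lam * e2 + lam * (v - v') * hP00 - (v - v') * hlam2
  have hu : u = u' := by linear_combination h1 + hv
  rw [hu, hv]
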